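/- For nonnegative real numbers x_1, ..., x_n and an integer m with 0 ≤ m < n, the (n-m)-th elementary symmetric polynomial satisfies Σ_{1 ≤ i_1 < ... < i_{n-m} ≤ n} x_{i_1} ··· x_{i_{n-m}} ≥ (n! / ((n-m)! m!)) · (x_1 x_2 ··· x_n)^((n-m)/n). -/

import Mathlib

open Finset

lemma count_mem_powersetCard {α : Type*} [DecidableEq α] [Fintype α] (k : ℕ) (hk : 0 < k)
    (i : α) :
    ((powersetCard k (univ : Finset α)).filter (fun s => i ∈ s)).card =
      (Fintype.card α - 1).choose (k - 1) := by
  have : ((powersetCard k (univ : Finset α)).filter (fun s => i ∈ s)).card =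
      (powersetCard (k - 1) ((univ : Finset α).erase i)).card := by
    apply Finset.card_nbij (fun s => s.erase i)
    · intro s hs
      simp only [Finset.mem_coe, mem_filter, mem_powersetCard] at hs
      simp only [Finset.mem_coe, mem_powersetCard]
      refine ⟨fun a ha => ?_, ?_⟩
      · rcases Finset.mem_erase.1 ha with ⟨h1, _⟩
        exact Finset.mem_erase.2 ⟨h1, Finset.mem_univ a⟩
      · rw [Finset.card_erase_of_mem hs.2, hs.1.2]
    · intro s hs t ht hst
      simp only [Finset.mem_coe, Finset.mem_filter, mem_powersetCard] at hs ht
      have := congrArg (insert i) hst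
      rwa [Finset.insert_erase hs.2, Finset.insert_erase ht.2] at this
    · intro t ht
      simp only [Finset.mem_coe, mem_powersetCard] at ht
      have hit : i ∉ t := fun h => (Finset.mem_erase.1 (ht.1 h)).1 rfl
      refine ⟨insert i t, ?_, ?_⟩
      · simp only [Finset.coe_filter, Set.mem_setOf_eq, mem_powersetCard]
        refine ⟨⟨Finset.subset_univ _, ?_⟩, Finset.mem_insert_self i t⟩
        rw [Finset.card_insert_of_notMem hit, ht.2, Nat.sub_add_cancel hk]
      · simp only []; rw [Finset.erase_insert hit]
  rw [this, Finset.card_powersetCard, Finset.card_erase_of_mem (Finset.mem_univ i),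
    Finset.card_univ]

theorem stmt1 (n m : ℕ) (hn : 0 < n) (hm : m < n) (x : Fin n → ℝ) (hx : ∀ i, 0 ≤ x i) :
    ∑ s ∈ Finset.powersetCard (n - m) (Finset.univ : Finset (Fin n)), ∏ i ∈ s, x i ≥
      ((n.factorial : ℝ) / (((n - m).factorial * m.factorial : ℕ) : ℝ)) *
        (∏ i, x i) ^ (((n : ℝ) - m) / n) := by
  set k := n - m with hk
  have hk0 : 0 < k := Nat.sub_pos_of_lt hm
  have hkn : k ≤ n := Nat.sub_le n m
  set S := Finset.powersetCard k (Finset.univ : Finset (Fin n)) with hS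
  have hcard : S.card = n.choose k := by
    rw [hS, Finset.card_powersetCard, Finset.card_univ, Fintype.card_fin]
  have hN0 : 0 < (n.choose k : ℝ) := by exact_mod_cast Nat.choose_pos hkn
  have hfacpos : (0 : ℝ) < ((k.factorial * m.factorial : ℕ) : ℝ) := by positivity
  -- coefficient equals choose
  have hcoef : ((n.factorial : ℝ) / ((k.factorial * m.factorial : ℕ) : ℝ)) = n.choose k := by
    have h1 : n.choose k * (k.factorial * m.factorial) = n.factorial := by
      have h2 := Nat.choose_mul_factorial_mul_factorial hkn
      rw [mul_assoc] at h2
      rwa [hk, Nat.sub_sub_self hm.le] at h2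
    rw [div_eq_iff hfacpos.ne']
    exact_mod_cast h1.symm
  have hxprod : (0:ℝ) ≤ ∏ i, x i := Finset.prod_nonneg fun i _ => hx i
  -- AM-GM
  have hAM := Real.geom_mean_le_arith_mean_weighted S (fun _ => (n.choose k : ℝ)⁻¹)
    (fun s => ∏ i ∈ s, x i)
    (fun _ _ => by positivity)
    (by rw [Finset.sum_const, hcard, nsmul_eq_mul, mul_inv_cancel₀ hN0.ne'])
    (fun s _ => Finset.prod_nonneg fun i _ => hx i)
  -- product over all subsets
  have hprodS : ∏ s ∈ S, ∏ i ∈ s, x i = (∏ i, x i) ^ ((n-1).choose (k-1)) := by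
    have h1 : ∀ s ∈ S, ∏ i ∈ s, x i = ∏ i : Fin n, if i ∈ s then x i else 1 := by
      intro s _
      rw [← Finset.prod_filter]
      congr 1
      ext i
      simp
    rw [Finset.prod_congr rfl h1, Finset.prod_comm, ← Finset.prod_pow]
    refine Finset.prod_congr rfl fun i _ => ?_
    rw [← Finset.prod_filter, Finset.prod_const,
      count_mem_powersetCard k hk0 i, Fintype.card_fin]
  -- ratio of binomials
  have hratio : ((n-1).choose (k-1) : ℝ) * (n.choose k : ℝ)⁻¹ = (k : ℝ) / n := by
    have h3 : n * (n-1).choose (k-1) = n.choose k * k := by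
      have := Nat.add_one_mul_choose_eq (n-1) (k-1)
      simpa only [Nat.succ_eq_add_one, Nat.sub_add_cancel hn, Nat.sub_add_cancel hk0] using this
    have h3' : (n : ℝ) * ((n-1).choose (k-1) : ℝ) = (n.choose k : ℝ) * k := by
      exact_mod_cast h3
    field_simp
    linarith [h3']
  -- geometric mean computation
  have hgm : ∏ s ∈ S, (∏ i ∈ s, x i) ^ ((n.choose k : ℝ)⁻¹) =
      (∏ i, x i) ^ ((k : ℝ) / n) := by
    rw [Real.finset_prod_rpow S _ (fun s _ => Finset.prod_nonneg fun i _ => hx i),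
      hprodS, ← Real.rpow_natCast (∏ i, x i) ((n-1).choose (k-1)),
      ← Real.rpow_mul hxprod, hratio]
  rw [hgm] at hAM
  have hkr : (k : ℝ) = (n : ℝ) - m := by
    rw [hk]; push_cast [Nat.cast_sub hm.le]; ring
  rw [ge_iff_le, hcoef, ← hkr]
  have hsum : ∑ s ∈ S, (n.choose k : ℝ)⁻¹ * ∏ i ∈ s, x i =
      (n.choose k : ℝ)⁻¹ * ∑ s ∈ S, ∏ i ∈ s, x i := by
    rw [Finset.mul_sum]
  rw [hsum] at hAM
  calc (n.choose k : ℝ) * (∏ i, x i) ^ ((k:ℝ) / n)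
      ≤ (n.choose k : ℝ) * ((n.choose k : ℝ)⁻¹ * ∑ s ∈ S, ∏ i ∈ s, x i) := by
        exact mul_le_mul_of_nonneg_left hAM hN0.le
    _ = ∑ s ∈ S, ∏ i ∈ s, x i := by
        rw [← mul_assoc, mul_inv_cancel₀ hN0.ne', one_mul]
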